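/- Let M be a matroid flock on E. Then there is a unique function g : ℤ^E → ℤ such that (1) g(0) = 0, and (2) g(α + e_I) = g(α) + r_α(I) for all α ∈ ℤ^E and all I ⊆ E, where e_I := Σ_{i∈I} e_i and r_α is the rank function of M_α. -/

import Mathlib

open Matroid Set

namespace FrobFlock

variable {E : Type*}

/-- The local rank function of a matroid: the size of a largest independent subset of `X`. -/
noncomputable def rk (M : Matroid E) (X : Set E) : ℕ :=
  sSup {n | ∃ I, I ⊆ X ∧ M.Indep I ∧ I.ncard = n}

/-- Deletion of the set `D` from the matroid `M`. -/
def mdel (M : Matroid E) (D : Set E) : Matroid E := M ↾ (M.E \ D)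

/-- Contraction of the set `C` in the matroid `M` (defined by duality). -/
def mcon (M : Matroid E) (C : Set E) : Matroid E := (mdel M✶ C)✶

/-- The 0/1 indicator vector of a set `I ⊆ E`. -/
noncomputable def eVec (I : Set E) : E → ℤ := I.indicator 1

/-- `M : ℤ^E → Matroid E` is a matroid flock of rank `d` on `E`:
each `M α` is a matroid on ground set `E` of rank `d`, satisfying (MF1) and (MF2). -/
def IsMatroidFlock [Fintype E] (d : ℕ) (M : (E → ℤ) → Matroid E) : Prop :=
  (∀ α, (M α).E = Set.univ) ∧
  (∀ α, rk (M α) Set.univ = d) ∧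
  (∀ α (i : E), mcon (M α) {i} = mdel (M (α + eVec {i})) {i}) ∧
  (∀ α, M α = M (α + 1))

/-- A matroid valuation `ν : binom(E,d) → ℤ ∪ {∞}`, encoded as a function on all finsets
which takes the value `⊤` outside `binom(E,d)`. -/
def IsValuation [DecidableEq E] (d : ℕ) (ν : Finset E → WithTop ℤ) : Prop :=
  (∀ B : Finset E, B.card ≠ d → ν B = ⊤) ∧
  (∃ B : Finset E, B.card = d ∧ ν B ≠ ⊤) ∧
  (∀ B B' : Finset E, B.card = d → B'.card = d → ∀ i ∈ B \ B', ∃ j ∈ B' \ B,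
      ν (insert j (B.erase i)) + ν (insert i (B'.erase j)) ≤ ν B + ν B')

/-- `B ∈ B^ν_α`: the set `B` attains the supremum `g^ν(α)`, i.e. `B` is a basis of `M^ν_α`. -/
def OptBasis (d : ℕ) (ν : Finset E → WithTop ℤ) (α : E → ℤ) (B : Finset E) : Prop :=
  B.card = d ∧ ν B ≠ ⊤ ∧ ∀ B' : Finset E, B'.card = d →
    ((∑ i ∈ B', α i : ℤ) : WithTop ℤ) + ν B ≤ ((∑ i ∈ B, α i : ℤ) : WithTop ℤ) + ν B'


set_option linter.unusedSectionVars false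
set_option linter.unusedVariables false

section RkBasics

variable [Fintype E] {M N : Matroid E} {I J X Y R : Set E} {i : E}

lemma ncard_eq_of_encard_eq {A B : Set E} (h : A.encard = B.encard) : A.ncard = B.ncard := by
  rw [Set.ncard_def, h, ← Set.ncard_def]

lemma rk_eq_ncard_of_basis' (hI : M.IsBasis' I X) : rk M X = I.ncard := by
  have hub : ∀ n ∈ {n | ∃ J, J ⊆ X ∧ M.Indep J ∧ J.ncard = n}, n ≤ I.ncard := by
    rintro n ⟨J, hJX, hJ, rfl⟩
    obtain ⟨J', hJ', hJJ'⟩ := hJ.subset_isBasis'_of_subset hJX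
    have h1 : J.ncard ≤ J'.ncard := Set.ncard_le_ncard hJJ' J'.toFinite
    have h3 : J'.ncard = I.ncard := ncard_eq_of_encard_eq (hJ'.encard_eq_encard hI)
    omega
  exact le_antisymm (csSup_le ⟨I.ncard, I, hI.subset, hI.indep, rfl⟩ hub)
    (le_csSup ⟨I.ncard, hub⟩ ⟨I, hI.subset, hI.indep, rfl⟩)

lemma rk_empty (M : Matroid E) : rk M (∅ : Set E) = 0 := by
  obtain ⟨I, hI⟩ := M.exists_isBasis' ∅
  have : I = ∅ := subset_empty_iff.1 hI.subset
  rw [rk_eq_ncard_of_basis' hI, this, Set.ncard_empty]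

lemma rk_eq_rk (h : ∀ J : Set E, (J ⊆ X ∧ M.Indep J) ↔ (J ⊆ Y ∧ N.Indep J)) :
    rk M X = rk N Y := by
  unfold rk
  congr 1
  ext n
  constructor
  · rintro ⟨J, h1, h2, rfl⟩
    obtain ⟨a, b⟩ := (h J).1 ⟨h1, h2⟩
    exact ⟨J, a, b, rfl⟩
  · rintro ⟨J, h1, h2, rfl⟩
    obtain ⟨a, b⟩ := (h J).2 ⟨h1, h2⟩
    exact ⟨J, a, b, rfl⟩

lemma rk_restrict (hXR : X ⊆ R) : rk (M ↾ R) X = rk M X :=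
  rk_eq_rk fun J => by
    rw [restrict_indep_iff]
    exact ⟨fun ⟨h1, h2, _⟩ => ⟨h1, h2⟩, fun ⟨h1, h2⟩ => ⟨h1, h2, h1.trans hXR⟩⟩

lemma base_basis' (hB : M.IsBase B) (hBX : B ⊆ X) : M.IsBasis' B X :=
  ⟨⟨hB.indep, hBX⟩, fun J hJ hBJ => (hB.eq_of_subset_indep hJ.1 hBJ).symm.subset⟩

end RkBasics


section Con
variable [Fintype E] {M N : Matroid E} {B I J X Y R K : Set E} {i : E}

lemma mcon_base_iff_aux (hE : M.E = univ) :
    (mcon M {i}).IsBase B ↔ M✶.IsBasis' (({i}ᶜ : Set E) \ B) {i}ᶜ ∧ B ⊆ ({i}ᶜ : Set E) := by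
  unfold mcon mdel
  rw [dual_isBase_iff', isBase_restrict_iff', restrict_ground_eq, dual_ground, hE,
    ← Set.compl_eq_univ_diff]

/-- Extending a basis' of `{i}ᶜ` in the dual to a base. -/
lemma basis'_compl_extend (hK : M✶.IsBasis' K ({i}ᶜ : Set E)) :
    ∃ K', M✶.IsBase K' ∧ K ⊆ K' ∧ K' ⊆ insert i K := by
  obtain ⟨K', hK', hKK'⟩ := hK.indep.exists_isBase_superset
  refine ⟨K', hK', hKK', fun j hj => ?_⟩
  by_cases hji : j = i
  · exact hji ▸ mem_insert i K
  by_cases hjK : j ∈ K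
  · exact mem_insert_of_mem _ hjK
  exfalso
  have hind : M✶.Indep (insert j K) := hK'.indep.subset (insert_subset hj hKK')
  have := hK.eq_of_subset_indep hind (subset_insert j K)
    (insert_subset (by simp [hji]) hK.subset)
  exact hjK (this ▸ mem_insert j K)

lemma nonloop_iff_exists_base : M.Indep {i} ↔ ∃ B, M.IsBase B ∧ i ∈ B := by
  constructor
  · intro h
    obtain ⟨B, hB, hiB⟩ := h.exists_isBase_superset
    exact ⟨B, hB, hiB rfl⟩
  · rintro ⟨B, hB, hiB⟩
    exact hB.indep.subset (singleton_subset_iff.2 hiB)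

lemma compl_base_dual' (hE : M.E = univ) (hB : M.IsBase B) : M✶.IsBase Bᶜ := by
  have := hB.compl_isBase_dual
  rwa [hE, ← Set.compl_eq_univ_diff] at this

lemma base_of_dual_base (hE : M.E = univ) (hB : M✶.IsBase B) : M.IsBase Bᶜ := by
  have := hB.compl_isBase_of_dual
  rwa [hE, ← Set.compl_eq_univ_diff] at this

lemma dual_basis'_compl_nonloop (hE : M.E = univ) (hi : M.Indep {i}) :
    M✶.IsBasis' K ({i}ᶜ : Set E) ↔ M✶.IsBase K ∧ K ⊆ ({i}ᶜ : Set E) := by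
  constructor
  · intro hK
    refine ⟨?_, hK.subset⟩
    obtain ⟨K', hK', hKK', hK'K⟩ := basis'_compl_extend hK
    by_cases hiK' : i ∈ K'
    · exfalso
      have hKeq : K' = insert i K := hK'K.antisymm (insert_subset hiK' hKK')
      obtain ⟨B₀, hB₀, hiB₀⟩ := nonloop_iff_exists_base.1 hi
      have hB₀c : M✶.IsBase B₀ᶜ := compl_base_dual' hE hB₀
      have hB₀sub : B₀ᶜ ⊆ ({i}ᶜ : Set E) :=
        Set.compl_subset_compl.2 (singleton_subset_iff.2 hiB₀)
      have h1 : K.ncard = B₀ᶜ.ncard :=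
        ncard_eq_of_encard_eq (hK.encard_eq_encard (base_basis' hB₀c hB₀sub))
      have h2 : B₀ᶜ.ncard = K'.ncard :=
        ncard_eq_of_encard_eq (hB₀c.encard_eq_encard_of_isBase hK')
      have hiK : i ∉ K := fun h => (hK.subset h) rfl
      rw [hKeq, Set.ncard_insert_of_notMem hiK] at h2
      omega
    · have : K' ⊆ K := fun j hj => (hK'K hj).resolve_left fun h => hiK' (h ▸ hj)
      rw [hKK'.antisymm this]
      exact hK'
  · rintro ⟨hK, hKR⟩
    exact base_basis' hK hKR

lemma dual_basis'_compl_loop (hE : M.E = univ) (hi : ¬ M.Indep {i}) :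
    M✶.IsBasis' K ({i}ᶜ : Set E) ↔ M✶.IsBase (insert i K) ∧ K ⊆ ({i}ᶜ : Set E) := by
  have hidual : ∀ X, M✶.IsBase X → i ∈ X := by
    intro X hX
    by_contra hiX
    exact hi ((base_of_dual_base hE hX).indep.subset (singleton_subset_iff.2 hiX))
  constructor
  · intro hK
    refine ⟨?_, hK.subset⟩
    obtain ⟨K', hK', hKK', hK'K⟩ := basis'_compl_extend hK
    have : K' = insert i K := hK'K.antisymm (insert_subset (hidual _ hK') hKK')
    rwa [← this]
  · rintro ⟨hK, hKR⟩
    have hiK : i ∉ K := fun h => (hKR h) rfl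
    refine ⟨⟨hK.indep.subset (subset_insert i K), hKR⟩, ?_⟩
    rintro J ⟨hJind, hJR⟩ hKJ
    obtain ⟨J', hJ', hJJ'⟩ := hJind.exists_isBase_superset
    have hiJ' : i ∈ J' := hidual _ hJ'
    have h1 : insert i K ⊆ J' := (insert_subset_insert hKJ).trans (insert_subset hiJ' hJJ')
    have h2 : insert i K = J' := hK.eq_of_subset_indep hJ'.indep h1
    intro x hx
    have : x ∈ insert i K := h2 ▸ hJJ' hx
    exact this.resolve_left fun h => (hJR hx) (by simp [h])

lemma mcon_base_nonloop (hE : M.E = univ) (hi : M.Indep {i}) :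
    (mcon M {i}).IsBase B ↔ i ∉ B ∧ M.IsBase (insert i B) := by
  rw [mcon_base_iff_aux hE, dual_basis'_compl_nonloop hE hi]
  constructor
  · rintro ⟨⟨hbase, -⟩, hBR⟩
    refine ⟨fun h => (hBR h) rfl, ?_⟩
    have := base_of_dual_base hE hbase
    have heq : (({i}ᶜ : Set E) \ B)ᶜ = insert i B := by
      ext x
      simp only [mem_compl_iff, mem_diff, mem_insert_iff, not_and, not_not]
      by_cases hx : x = i <;> simp [hx]
    rwa [heq] at this
  · rintro ⟨hiB, hbase⟩
    have hBR : B ⊆ ({i}ᶜ : Set E) := fun x hx => fun h => hiB (h ▸ hx)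
    have heq : ({i}ᶜ : Set E) \ B = (insert i B)ᶜ := by
      ext x; simp only [mem_diff, mem_compl_iff, mem_insert_iff, mem_singleton_iff]; tauto
    refine ⟨⟨?_, diff_subset⟩, hBR⟩
    rw [heq]
    exact compl_base_dual' hE hbase

lemma mcon_base_loop (hE : M.E = univ) (hi : ¬ M.Indep {i}) :
    (mcon M {i}).IsBase B ↔ i ∉ B ∧ M.IsBase B := by
  rw [mcon_base_iff_aux hE, dual_basis'_compl_loop hE hi]
  constructor
  · rintro ⟨⟨hbase, -⟩, hBR⟩
    have hiB : i ∉ B := fun h => (hBR h) rfl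
    refine ⟨hiB, ?_⟩
    have heq : insert i (({i}ᶜ : Set E) \ B) = Bᶜ := by
      ext x
      simp only [mem_insert_iff, mem_diff, mem_compl_iff, mem_singleton_iff]
      by_cases hx : x = i
      · subst hx; simp [hiB]
      · simp [hx]
    rw [heq] at hbase
    have := base_of_dual_base hE hbase
    rwa [compl_compl] at this
  · rintro ⟨hiB, hbase⟩
    have hBR : B ⊆ ({i}ᶜ : Set E) := fun x hx => fun h => hiB (h ▸ hx)
    have heq : insert i (({i}ᶜ : Set E) \ B) = Bᶜ := by
      ext x
      simp only [mem_insert_iff, mem_diff, mem_compl_iff, mem_singleton_iff]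
      by_cases hx : x = i
      · subst hx; simp [hiB]
      · simp [hx]
    refine ⟨⟨?_, fun x hx => hx.1⟩, hBR⟩
    rw [heq]
    exact compl_base_dual' hE hbase

lemma mcon_indep_nonloop (hE : M.E = univ) (hi : M.Indep {i}) (hiJ : i ∉ J) :
    (mcon M {i}).Indep J ↔ M.Indep (insert i J) := by
  rw [indep_iff]
  constructor
  · rintro ⟨B, hB, hJB⟩
    rw [mcon_base_nonloop hE hi] at hB
    exact hB.2.indep.subset (insert_subset_insert hJB)
  · intro h
    obtain ⟨B₀, hB₀, hsub⟩ := h.exists_isBase_superset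
    have hiB₀ : i ∈ B₀ := hsub (mem_insert i J)
    refine ⟨B₀ \ {i}, ?_, ?_⟩
    · rw [mcon_base_nonloop hE hi]
      refine ⟨by simp, ?_⟩
      rwa [insert_diff_singleton, insert_eq_of_mem hiB₀]
    · exact fun x hx => ⟨hsub (mem_insert_of_mem _ hx), fun h' => hiJ (h' ▸ hx)⟩

lemma mcon_indep_loop (hE : M.E = univ) (hi : ¬ M.Indep {i}) (hiJ : i ∉ J) :
    (mcon M {i}).Indep J ↔ M.Indep J := by
  rw [indep_iff, indep_iff]
  constructor
  · rintro ⟨B, hB, hJB⟩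
    rw [mcon_base_loop hE hi] at hB
    exact ⟨B, hB.2, hJB⟩
  · rintro ⟨B, hB, hJB⟩
    refine ⟨B, ?_, hJB⟩
    rw [mcon_base_loop hE hi]
    refine ⟨fun h => hi (hB.indep.subset (singleton_subset_iff.2 h)), hB⟩

end Con


section RkCon
variable [Fintype E] {M N : Matroid E} {B I J X Y R K : Set E} {i : E}

lemma rk_singleton_nonloop (hi : M.Indep {i}) : rk M {i} = 1 := by
  have hb : M.IsBasis' {i} {i} := ⟨⟨hi, subset_rfl⟩, fun J hJ _ => hJ.2⟩
  rw [rk_eq_ncard_of_basis' hb, Set.ncard_singleton]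

lemma rk_singleton_loop (hi : ¬ M.Indep {i}) : rk M {i} = 0 := by
  obtain ⟨K, hK⟩ := M.exists_isBasis' {i}
  rcases subset_singleton_iff_eq.1 hK.subset with h | h
  · rw [rk_eq_ncard_of_basis' hK, h, Set.ncard_empty]
  · exact absurd (h ▸ hK.indep) hi

lemma rk_con (hE : M.E = univ) (hiI : i ∈ I) :
    rk M I = rk M {i} + rk (mcon M {i}) (I \ {i}) := by
  by_cases hi : M.Indep {i}
  · obtain ⟨B, hB⟩ := (mcon M {i}).exists_isBasis' (I \ {i})
    have hiB : i ∉ B := fun h => (hB.subset h).2 rfl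
    have hBI : M.IsBasis' (insert i B) I := by
      refine ⟨⟨(mcon_indep_nonloop hE hi hiB).1 hB.indep,
        insert_subset hiI (hB.subset.trans diff_subset)⟩, ?_⟩
      rintro J ⟨hJind, hJI⟩ hBJ
      have hiJ : i ∈ J := hBJ (mem_insert i B)
      have h1 : (mcon M {i}).Indep (J \ {i}) := by
        rw [mcon_indep_nonloop hE hi (fun h => h.2 rfl : i ∉ J \ {i})]
        rwa [insert_diff_singleton, insert_eq_of_mem hiJ]
      have h2 : B ⊆ J \ {i} :=
        fun x hx => ⟨hBJ (mem_insert_of_mem _ hx), fun h' => hiB (h' ▸ hx)⟩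
      have h3 := hB.eq_of_subset_indep h1 h2 (diff_subset_diff_left hJI)
      intro x hx
      rcases eq_or_ne x i with h | h
      · exact h ▸ mem_insert i B
      · exact mem_insert_of_mem _ (h3 ▸ (⟨hx, h⟩ : x ∈ J \ {i}))
    rw [rk_eq_ncard_of_basis' hBI, rk_eq_ncard_of_basis' hB, rk_singleton_nonloop hi,
      Set.ncard_insert_of_notMem hiB]
    omega
  · have h1 : rk M I = rk M (I \ {i}) := by
      refine rk_eq_rk fun J => ⟨fun ⟨hJI, hJ⟩ => ⟨?_, hJ⟩, fun ⟨hJI, hJ⟩ => ⟨hJI.trans diff_subset, hJ⟩⟩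
      intro x hx
      refine ⟨hJI hx, fun h' => hi (hJ.subset (singleton_subset_iff.2 ?_))⟩
      rwa [← h']
    have h2 : rk (mcon M {i}) (I \ {i}) = rk M (I \ {i}) := by
      refine rk_eq_rk fun J => ⟨fun ⟨hJI, hJ⟩ => ⟨hJI, ?_⟩, fun ⟨hJI, hJ⟩ => ⟨hJI, ?_⟩⟩
      · exact (mcon_indep_loop hE hi (fun h => (hJI h).2 rfl)).1 hJ
      · exact (mcon_indep_loop hE hi (fun h => (hJI h).2 rfl)).2 hJ
    rw [rk_singleton_loop hi, h1, h2]
    omega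

end RkCon


section EVec
open scoped Classical
variable {I K A B : Set E} {i x : E}

lemma eVec_apply (I : Set E) (x : E) : eVec I x = if x ∈ I then 1 else 0 := by
  simp [eVec, Set.indicator_apply]

@[simp] lemma eVec_empty : eVec (∅ : Set E) = 0 := by
  funext x; simp [eVec_apply]

@[simp] lemma eVec_univ : eVec (univ : Set E) = 1 := by
  funext x; simp [eVec_apply, Pi.one_apply]

lemma eVec_nonneg (I : Set E) : 0 ≤ eVec I := by
  intro x
  simp only [Pi.zero_apply, eVec_apply]
  split <;> simp

lemma eVec_union_add_inter (A B : Set E) :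
    eVec (A ∪ B) + eVec (A ∩ B) = eVec A + eVec B := by
  funext x
  simp only [Pi.add_apply, eVec_apply, mem_union, mem_inter_iff]
  by_cases hA : x ∈ A <;> by_cases hB : x ∈ B <;> simp [hA, hB]

lemma eVec_sdiff (hKI : K ⊆ I) : eVec K + eVec (I \ K) = eVec I := by
  funext x
  simp only [Pi.add_apply, eVec_apply, mem_diff]
  by_cases hK : x ∈ K
  · simp [hK, hKI hK]
  · by_cases hI : x ∈ I <;> simp [hK, hI]

end EVec

section Flock
variable [Fintype E] {d : ℕ} {M : (E → ℤ) → Matroid E} {I K A B : Set E} {i : E}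
  {α : E → ℤ}

lemma step_single (hM : IsMatroidFlock d M) (α : E → ℤ) (hiI : i ∈ I) :
    rk (M α) I = rk (M α) {i} + rk (M (α + eVec {i})) (I \ {i}) := by
  rw [rk_con (hM.1 α) hiI, hM.2.2.1 α i]
  unfold mdel
  congr 1
  exact rk_restrict (by rw [hM.1]; exact fun x hx => ⟨trivial, hx.2⟩)

lemma step_subset (hM : IsMatroidFlock d M) :
    ∀ (n : ℕ) (K I : Set E) (α : E → ℤ), K.ncard = n → K ⊆ I →
      rk (M α) I = rk (M α) K + rk (M (α + eVec K)) (I \ K) := by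
  intro n
  induction n using Nat.strong_induction_on with
  | _ n ih =>
    intro K I α hcard hKI
    rcases K.eq_empty_or_nonempty with rfl | ⟨i, hiK⟩
    · simp [rk_empty]
    · have h1 := step_single hM α (hKI hiK)
      have h2 := step_single hM α hiK (I := K)
      have h3 := ih (K \ {i}).ncard (hcard ▸ Set.ncard_diff_singleton_lt_of_mem hiK)
        (K \ {i}) (I \ {i}) (α + eVec {i}) rfl (diff_subset_diff_left hKI)
      have he : α + eVec {i} + eVec (K \ {i}) = α + eVec K := by
        rw [add_assoc, eVec_sdiff (singleton_subset_iff.2 hiK)]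
      have hset : (I \ {i}) \ (K \ {i}) = I \ K := by
        ext x
        simp only [mem_diff, mem_singleton_iff]
        by_cases hx : x = i
        · simp [hx, hiK]
        · simp [hx]
      rw [he, hset] at h3
      omega

lemma quad (hM : IsMatroidFlock d M) (α : E → ℤ) (A B : Set E) :
    rk (M α) (A ∩ B) + rk (M (α + eVec (A ∩ B))) (A ∪ B)
      = rk (M α) A + rk (M (α + eVec A)) B := by
  have h1 := step_subset hM (A ∩ B).ncard (A ∩ B) A α rfl inter_subset_left
  have h2 := step_subset hM (A \ B).ncard (A \ B) (A ∪ B) (α + eVec (A ∩ B)) rfl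
    (diff_subset.trans subset_union_left)
  have hs1 : A \ (A ∩ B) = A \ B := by
    ext x; simp only [mem_diff, mem_inter_iff]; tauto
  have he : α + eVec (A ∩ B) + eVec (A \ B) = α + eVec A := by
    rw [add_assoc, ← hs1, eVec_sdiff inter_subset_left]
  have hs2 : (A ∪ B) \ (A \ B) = B := by
    ext x; simp only [mem_diff, mem_union]; tauto
  rw [hs1] at h1
  rw [he, hs2] at h2
  omega

end Flock

section GDef
variable [Fintype E] {d : ℕ} {M : (E → ℤ) → Matroid E} {I K A B J : Set E} {i : E}
  {α : E → ℤ} {m t : ℕ}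

/-- Sum of ranks along the "layered path" from `0` to `α`. -/
noncomputable def layerSum (M : (E → ℤ) → Matroid E) (m : ℕ) (α : E → ℤ) : ℕ :=
  ∑ k ∈ Finset.range m, rk (M (fun i => min (α i) (k : ℤ))) {i | (k : ℤ) < α i}

def mbound (α : E → ℤ) : ℕ := Finset.univ.sup fun i => (α i).toNat

noncomputable def G (M : (E → ℤ) → Matroid E) (α : E → ℤ) : ℕ :=
  layerSum M (mbound α) α

lemma le_mbound (α : E → ℤ) (i : E) : α i ≤ (mbound α : ℤ) := by
  calc α i ≤ ((α i).toNat : ℤ) := Int.self_le_toNat _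
  _ ≤ (mbound α : ℤ) := by
      exact_mod_cast Finset.le_sup (f := fun i => (α i).toNat) (Finset.mem_univ i)

lemma layerSum_congr (h : ∀ i, α i ≤ (m : ℤ)) (hmm : m ≤ m') :
    layerSum M m' α = layerSum M m α := by
  unfold layerSum
  refine (Finset.sum_subset (Finset.range_subset_range.2 hmm) ?_).symm
  intro k _ hk
  rw [Finset.mem_range, not_lt] at hk
  have : {i | (k : ℤ) < α i} = ∅ := by
    ext i
    simp only [mem_setOf_eq, mem_empty_iff_false, iff_false, not_lt]
    exact le_trans (h i) (by exact_mod_cast hk)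
  rw [this, rk_empty]

lemma G_eq_layerSum (h : ∀ i, α i ≤ (m : ℤ)) : G M α = layerSum M m α := by
  unfold G
  have h1 := layerSum_congr (M := M) (m := m) (m' := max m (mbound α)) h (le_max_left _ _)
  have h2 := layerSum_congr (M := M) (m := mbound α) (m' := max m (mbound α)) (le_mbound α)
    (le_max_right _ _)
  rw [← h2, h1]

lemma G_zero : G M 0 = 0 := by
  have : G M 0 = layerSum M 0 0 := G_eq_layerSum (by simp)
  simp [this, layerSum]

lemma layerSum_succ : layerSum M (t + 1) α
    = layerSum M t α + rk (M (fun i => min (α i) (t : ℤ))) {i | (t : ℤ) < α i} := by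
  unfold layerSum
  rw [Finset.sum_range_succ]

/-- Case (a): stepping by a set containing the support. -/
lemma G_step_supp (hM : IsMatroidFlock d M) (h0 : 0 ≤ α)
    (hsupp : ∀ i, 0 < α i → i ∈ I) :
    G M (α + eVec I) = G M α + rk (M α) I := by
  classical
  have h0' : ∀ i, (0:ℤ) ≤ α i := fun i => by simpa using h0 i
  have hα0 : ∀ i, i ∉ I → α i = 0 := fun i hi =>
    le_antisymm (by by_contra h; exact hi (hsupp i (lt_of_not_ge h))) (h0' i)
  set m := mbound α with hm
  have hb : ∀ i, α i ≤ (m : ℤ) := le_mbound α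
  have hb' : ∀ i, (α + eVec I) i ≤ ((m + 1 : ℕ) : ℤ) := by
    intro i
    have h1 : eVec I i ≤ 1 := by rw [eVec_apply]; split <;> simp
    have h2 := hb i
    rw [Pi.add_apply]
    push_cast
    linarith
  have key : ∀ t : ℕ, layerSum M (t + 1) (α + eVec I)
      = layerSum M t α + rk (M (fun i => min (α i) (t : ℤ))) I := by
    intro t
    induction t with
    | zero =>
      have hfun : (fun i => min ((α + eVec I) i) ((0 : ℕ) : ℤ))
          = (fun i => min (α i) ((0 : ℕ) : ℤ)) := by
        funext i
        have h1 : (0:ℤ) ≤ α i := h0' i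
        have h2 : (0:ℤ) ≤ (α + eVec I) i := add_nonneg (h0' i) (eVec_nonneg I i)
        rw [Nat.cast_zero, min_eq_right h2, min_eq_right h1]
      have hset : {i | ((0 : ℕ) : ℤ) < (α + eVec I) i} = I := by
        ext i
        simp only [mem_setOf_eq, Pi.add_apply, eVec_apply, Nat.cast_zero]
        by_cases hi : i ∈ I
        · have := h0' i
          simp only [hi, if_true, iff_true]
          omega
        · have := hα0 i hi
          simp only [hi, if_false, iff_false]
          omega
      rw [layerSum_succ, hfun, hset]
      simp [layerSum]
    | succ t ih =>
      have hL : {i | ((t : ℕ) : ℤ) < α i} ⊆ I := fun i hi =>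
        hsupp i (lt_of_le_of_lt (by exact_mod_cast Nat.zero_le t) hi)
      have hfun : (fun i => min ((α + eVec I) i) ((t + 1 : ℕ) : ℤ))
          = (fun i => min (α i) (t : ℤ)) + eVec I := by
        funext i
        simp only [Pi.add_apply, eVec_apply]
        by_cases hi : i ∈ I
        · simp only [hi, if_true]
          push_cast
          omega
        · have := hα0 i hi
          simp only [hi, if_false]
          push_cast
          omega
      have hset : {i | ((t + 1 : ℕ) : ℤ) < (α + eVec I) i} = {i | (t : ℤ) < α i} := by
        ext i
        simp only [mem_setOf_eq, Pi.add_apply, eVec_apply]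
        by_cases hi : i ∈ I
        · simp only [hi, if_true]
          push_cast
          omega
        · have := hα0 i hi
          simp only [hi, if_false]
          push_cast
          omega
      have hnext : (fun i => min (α i) (t : ℤ)) + eVec {i | (t : ℤ) < α i}
          = fun i => min (α i) ((t + 1 : ℕ) : ℤ) := by
        funext i
        simp only [Pi.add_apply, eVec_apply, mem_setOf_eq]
        by_cases hi : (t : ℤ) < α i
        · simp only [hi, if_true]
          push_cast
          omega
        · simp only [hi, if_false]
          push_cast
          omega
      have hq := quad hM (fun i => min (α i) (t : ℤ)) I {i | ((t : ℕ) : ℤ) < α i}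
      rw [inter_eq_self_of_subset_right hL, union_eq_self_of_subset_right hL, hnext] at hq
      rw [layerSum_succ (t := t + 1), hfun, hset, ih, layerSum_succ (t := t)]
      omega
  have hαm : (fun i => min (α i) ((m : ℕ) : ℤ)) = α := by
    funext i
    exact min_eq_left (hb i)
  rw [G_eq_layerSum hb', G_eq_layerSum (m := m) hb, key m, hαm]

end GDef

section Vsum
variable [Fintype E] {d : ℕ} {M : (E → ℤ) → Matroid E} {I K J : Set E} {i : E}
  {α : E → ℤ}

def vsum [Fintype E] (α : E → ℤ) : ℕ := ∑ i, (α i).toNat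

lemma vsum_add_eVec (h0 : 0 ≤ α) (K : Set E) :
    vsum (α + eVec K) = vsum α + K.ncard := by
  classical
  unfold vsum
  have hpt : ∀ i, ((α + eVec K) i).toNat = (α i).toNat + (if i ∈ K then 1 else 0) := by
    intro i
    have hai : (0:ℤ) ≤ α i := by simpa using h0 i
    rw [Pi.add_apply, eVec_apply]
    split <;> omega
  rw [Finset.sum_congr rfl (fun i _ => hpt i), Finset.sum_add_distrib]
  congr 1
  rw [← Finset.card_filter]
  rw [Set.ncard_eq_toFinset_card']
  congr 1
  ext x
  simp

lemma G_step_all (hM : IsMatroidFlock d M) : ∀ (N s : ℕ) (α : E → ℤ) (I : Set E),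
    0 ≤ α → vsum α + I.ncard = N → vsum α = s →
    G M (α + eVec I) = G M α + rk (M α) I := by
  intro N
  induction N using Nat.strong_induction_on with
  | _ N ihN =>
  intro s
  induction s using Nat.strong_induction_on with
  | _ s ihs =>
  intro α I h0 hN hs
  by_cases hsupp : ∀ i, 0 < α i → i ∈ I
  · exact G_step_supp hM h0 hsupp
  push_neg at hsupp
  obtain ⟨j, hj0, hjI⟩ := hsupp
  rcases I.eq_empty_or_nonempty with rfl | hIne
  · simp [rk_empty]
  have hIpos : 0 < I.ncard := (Set.ncard_pos I.toFinite).2 hIne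
  set J := {i | 0 < α i} with hJdef
  have hjJ : j ∈ J := hj0
  set α' := α - eVec J with hα'def
  have h0' : (0 : E → ℤ) ≤ α' := by
    intro i
    have hai : (0:ℤ) ≤ α i := by simpa using h0 i
    simp only [hα'def, Pi.sub_apply, Pi.zero_apply, eVec_apply]
    by_cases hi : i ∈ J
    · have : 0 < α i := hi
      simp only [hi, if_true]
      omega
    · have : ¬ 0 < α i := hi
      simp only [hi, if_false]
      omega
  have hαeq : α' + eVec J = α := by
    funext i
    simp [hα'def]
  have hvs : vsum α = vsum α' + J.ncard := by
    conv_lhs => rw [← hαeq]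
    exact vsum_add_eVec h0' J
  have hJIJ : (J ∩ I).ncard < J.ncard :=
    Set.ncard_lt_ncard ⟨inter_subset_left,
      fun hsub => hjI (inter_subset_right (hsub hjJ))⟩ J.toFinite
  have hcards : (J ∪ I).ncard + (J ∩ I).ncard = J.ncard + I.ncard :=
    Set.ncard_union_add_ncard_inter J I
  -- (1)
  have h1 : G M α = G M α' + rk (M α') J := by
    have := ihN (vsum α) (by omega) (vsum α') α' J h0' (by omega) rfl
    rwa [hαeq] at this
  -- (2)
  have h2 : G M (α' + eVec (J ∩ I)) = G M α' + rk (M α') (J ∩ I) :=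
    ihN (vsum α' + (J ∩ I).ncard) (by omega) (vsum α') α' (J ∩ I) h0' rfl rfl
  -- (3)
  have hvs'' : vsum (α' + eVec (J ∩ I)) = vsum α' + (J ∩ I).ncard :=
    vsum_add_eVec h0' (J ∩ I)
  have h3 : G M ((α' + eVec (J ∩ I)) + eVec (J ∪ I))
      = G M (α' + eVec (J ∩ I)) + rk (M (α' + eVec (J ∩ I))) (J ∪ I) :=
    ihs (vsum (α' + eVec (J ∩ I))) (by omega) (α' + eVec (J ∩ I)) (J ∪ I)
      (add_nonneg h0' (eVec_nonneg _)) (by omega) rfl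
  -- (4)
  have h4 := quad hM α' J I
  rw [hαeq] at h4
  -- (5)
  have h5 : α' + eVec (J ∩ I) + eVec (J ∪ I) = α + eVec I := by
    rw [← hαeq, add_assoc, add_assoc]
    congr 1
    rw [add_comm (eVec (J ∩ I)), eVec_union_add_inter]
  rw [← h5, h3, h2, h1]
  omega

end Vsum

section Final
variable [Fintype E] {d : ℕ} {M : (E → ℤ) → Matroid E} {I K J : Set E} {i : E}
  {α β : E → ℤ}

lemma M_add_nat (hM : IsMatroidFlock d M) (α : E → ℤ) (n : ℕ) :
    M (α + (n : E → ℤ)) = M α := by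
  induction n with
  | zero => simp
  | succ n ih =>
    have he : α + ((n + 1 : ℕ) : E → ℤ) = (α + (n : E → ℤ)) + 1 := by
      funext i
      simp only [Pi.add_apply, Pi.natCast_apply, Pi.one_apply]
      push_cast
      ring
    rw [he, ← hM.2.2.2 (α + (n : E → ℤ)), ih]

lemma nat_nonneg_fun (n : ℕ) : (0 : E → ℤ) ≤ (n : E → ℤ) := by
  intro i
  simp

/-- Any function satisfying property (2) increases by `n*d` along `n • 𝟙`. -/
lemma sat_add_nat (hM : IsMatroidFlock d M) {f : (E → ℤ) → ℤ}
    (hf : ∀ (α : E → ℤ) (I : Set E), f (α + eVec I) = f α + rk (M α) I) (α : E → ℤ) :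
    ∀ n : ℕ, f (α + (n : E → ℤ)) = f α + n * d := by
  intro n
  induction n with
  | zero => simp
  | succ n ih =>
    have he : α + ((n + 1 : ℕ) : E → ℤ) = (α + (n : E → ℤ)) + eVec univ := by
      funext i
      simp only [Pi.add_apply, Pi.natCast_apply, eVec_univ, Pi.one_apply]
      push_cast
      ring
    rw [he, hf, ih, hM.2.1]
    push_cast
    ring

lemma G_add_nat (hM : IsMatroidFlock d M) (h0 : 0 ≤ α) :
    ∀ n : ℕ, G M (α + (n : E → ℤ)) = G M α + n * d := by
  intro n
  induction n with
  | zero => simp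
  | succ n ih =>
    have he : α + ((n + 1 : ℕ) : E → ℤ) = (α + (n : E → ℤ)) + eVec univ := by
      funext i
      simp only [Pi.add_apply, Pi.natCast_apply, eVec_univ, Pi.one_apply]
      push_cast
      ring
    have h0n : (0 : E → ℤ) ≤ α + (n : E → ℤ) := add_nonneg h0 (nat_nonneg_fun n)
    rw [he, G_step_all hM _ _ _ univ h0n rfl rfl, ih, hM.2.1]
    ring

def nneg [Fintype E] (α : E → ℤ) : ℕ := ∑ i, (-(α i)).toNat

lemma nneg_spec (α : E → ℤ) : 0 ≤ α + ((nneg α : ℕ) : E → ℤ) := by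
  intro i
  have h1 : (-(α i)).toNat ≤ nneg α :=
    Finset.single_le_sum (f := fun i => (-(α i)).toNat) (fun _ _ => Nat.zero_le _)
      (Finset.mem_univ i)
  have h2 : -(α i) ≤ ((-(α i)).toNat : ℤ) := Int.self_le_toNat _
  have h3 : ((-(α i)).toNat : ℤ) ≤ (nneg α : ℤ) := by exact_mod_cast h1
  simp only [Pi.zero_apply, Pi.add_apply, Pi.natCast_apply]
  omega

/-- The function `g`. -/
noncomputable def gfun [Fintype E] (M : (E → ℤ) → Matroid E) (d : ℕ) (α : E → ℤ) : ℤ :=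
  (G M (α + ((nneg α : ℕ) : E → ℤ)) : ℤ) - (nneg α : ℤ) * d

lemma gfun_spec (hM : IsMatroidFlock d M) (n : ℕ) (h : 0 ≤ α + (n : E → ℤ)) :
    gfun M d α = (G M (α + (n : E → ℤ)) : ℤ) - (n : ℤ) * d := by
  set p := nneg α with hp
  set q := max n p with hq
  have hqn : n ≤ q := le_max_left _ _
  have hqp : p ≤ q := le_max_right _ _
  have e1 : α + (q : E → ℤ) = (α + (n : E → ℤ)) + ((q - n : ℕ) : E → ℤ) := by
    funext i
    simp only [Pi.add_apply, Pi.natCast_apply]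
    have : ((q - n : ℕ) : ℤ) = (q : ℤ) - n := by
      push_cast [Nat.cast_sub hqn]
      ring
    omega
  have e2 : α + (q : E → ℤ) = (α + (p : E → ℤ)) + ((q - p : ℕ) : E → ℤ) := by
    funext i
    simp only [Pi.add_apply, Pi.natCast_apply]
    have : ((q - p : ℕ) : ℤ) = (q : ℤ) - p := by
      push_cast [Nat.cast_sub hqp]
      ring
    omega
  have g1 : G M (α + (q : E → ℤ)) = G M (α + (n : E → ℤ)) + (q - n) * d := by
    rw [e1]; exact G_add_nat hM h (q - n)
  have g2 : G M (α + (q : E → ℤ)) = G M (α + (p : E → ℤ)) + (q - p) * d := by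
    rw [e2]; exact G_add_nat hM (nneg_spec α) (q - p)
  have g3 : (G M (α + (p : E → ℤ)) : ℤ) + ((q:ℤ) - p) * d
      = (G M (α + (n : E → ℤ)) : ℤ) + ((q:ℤ) - n) * d := by
    have := g1.symm.trans g2
    have hc : ((q - n : ℕ) : ℤ) = (q:ℤ) - n := by push_cast [Nat.cast_sub hqn]; ring
    have hc' : ((q - p : ℕ) : ℤ) = (q:ℤ) - p := by push_cast [Nat.cast_sub hqp]; ring
    calc (G M (α + (p : E → ℤ)) : ℤ) + ((q:ℤ) - p) * d
        = ((G M (α + (p : E → ℤ)) + (q - p) * d : ℕ) : ℤ) := by push_cast [hc']; ring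
      _ = ((G M (α + (n : E → ℤ)) + (q - n) * d : ℕ) : ℤ) := by rw [← g2, g1]
      _ = (G M (α + (n : E → ℤ)) : ℤ) + ((q:ℤ) - n) * d := by push_cast [hc]; ring
  unfold gfun
  rw [← hp]
  linarith [g3]

lemma gfun_step (hM : IsMatroidFlock d M) (α : E → ℤ) (I : Set E) :
    gfun M d (α + eVec I) = gfun M d α + rk (M α) I := by
  set n := nneg α with hn
  have h1 : 0 ≤ α + (n : E → ℤ) := nneg_spec α
  have hcomm : (α + eVec I) + (n : E → ℤ) = (α + (n : E → ℤ)) + eVec I := by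
    rw [add_right_comm]
  have h2 : 0 ≤ (α + eVec I) + (n : E → ℤ) := by
    rw [hcomm]; exact add_nonneg h1 (eVec_nonneg I)
  rw [gfun_spec hM n h2, gfun_spec hM n h1, hcomm,
    G_step_all hM (vsum (α + (n : E → ℤ)) + I.ncard) (vsum (α + (n : E → ℤ)))
      (α + (n : E → ℤ)) I h1 rfl rfl, M_add_nat hM α n]
  push_cast
  ring

lemma gfun_zero (hM : IsMatroidFlock d M) : gfun M d (0 : E → ℤ) = 0 := by
  have h : (0 : E → ℤ) ≤ 0 + ((0 : ℕ) : E → ℤ) := by simp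
  rw [gfun_spec hM 0 h]
  have : (0 : E → ℤ) + ((0 : ℕ) : E → ℤ) = 0 := by simp
  rw [this, G_zero]
  simp

lemma vsum_eq_zero (h0 : 0 ≤ β) (h : vsum β = 0) : β = 0 := by
  funext i
  have hai : (0:ℤ) ≤ β i := by simpa using h0 i
  have : (β i).toNat = 0 := by
    have := Finset.sum_eq_zero_iff.1 h i (Finset.mem_univ i)
    exact this
  simp only [Pi.zero_apply]
  omega

theorem flock_exists_unique_g' (d : ℕ) (M : (E → ℤ) → Matroid E)
    (hM : IsMatroidFlock d M) :
    ∃! g : (E → ℤ) → ℤ, g 0 = 0 ∧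
      ∀ (α : E → ℤ) (I : Set E), g (α + eVec I) = g α + rk (M α) I := by
  refine ⟨gfun M d, ⟨gfun_zero hM, fun α I => gfun_step hM α I⟩, ?_⟩
  rintro g' ⟨hg0, hgstep⟩
  have key : ∀ (k : ℕ) (β : E → ℤ), 0 ≤ β → vsum β = k → g' β = gfun M d β := by
    intro k
    induction k using Nat.strong_induction_on with
    | _ k ih =>
    intro β h0 hk
    by_cases hβ : β = 0
    · rw [hβ, hg0, gfun_zero hM]
    · set J := {i | 0 < β i} with hJ
      set β' := β - eVec J with hβ'
      have h0' : (0 : E → ℤ) ≤ β' := by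
        intro i
        have hai : (0:ℤ) ≤ β i := by simpa using h0 i
        simp only [hβ', Pi.sub_apply, Pi.zero_apply, eVec_apply]
        by_cases hi : i ∈ J
        · have : 0 < β i := hi
          simp only [hi, if_true]
          omega
        · simp only [hi, if_false]
          omega
      have hβeq : β' + eVec J = β := by funext i; simp [hβ']
      have hJne : J.Nonempty := by
        by_contra h
        rw [not_nonempty_iff_eq_empty] at h
        apply hβ
        funext i
        have hai : (0:ℤ) ≤ β i := by simpa using h0 i
        have : i ∉ J := h ▸ notMem_empty i
        have : ¬ 0 < β i := this
        simp only [Pi.zero_apply]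
        omega
      have hvs : vsum β = vsum β' + J.ncard := by
        conv_lhs => rw [← hβeq]
        exact vsum_add_eVec h0' J
      have hJpos : 0 < J.ncard := (Set.ncard_pos J.toFinite).2 hJne
      have hlt : vsum β' < k := by omega
      have h1 := hgstep β' J
      have h2 := gfun_step hM β' J
      rw [hβeq] at h1 h2
      rw [h1, h2, ih (vsum β') hlt β' h0' rfl]
  funext α
  set n := nneg α with hn
  have h1 : 0 ≤ α + (n : E → ℤ) := nneg_spec α
  have e1 : g' (α + (n : E → ℤ)) = g' α + n * d := sat_add_nat hM hgstep α n
  have e2 : gfun M d (α + (n : E → ℤ)) = gfun M d α + n * d :=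
    sat_add_nat hM (fun a I => gfun_step hM a I) α n
  have e3 : g' (α + (n : E → ℤ)) = gfun M d (α + (n : E → ℤ)) := key _ _ h1 rfl
  omega

end Final


/-- **Lemma.** Let `M` be a matroid flock on `E`.  There is a unique function `g : ℤ^E → ℤ`
such that (1) `g(0) = 0`, and (2) `g(α + e_I) = g(α) + r_α(I)` for all `α ∈ ℤ^E` and
`I ⊆ E`. -/
theorem flock_exists_unique_g [Fintype E] (d : ℕ) (M : (E → ℤ) → Matroid E)
    (hM : IsMatroidFlock d M) :
    ∃! g : (E → ℤ) → ℤ, g 0 = 0 ∧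
      ∀ (α : E → ℤ) (I : Set E), g (α + eVec I) = g α + rk (M α) I := by
  exact flock_exists_unique_g' d M hM

end FrobFlock
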